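/- Let ρ_{θ₁},...,ρ_{θₙ} be linearly independent density matrices on a finite-dimensional Hilbert space, and Γ a map on them into density matrices such that for all ε > 0 and every finite-outcome POVM M there is a POVM M′ with Σ_t |tr Γ(ρ_{θᵢ})M(t) − tr ρ_{θᵢ} M′(t)| < ε for all i. Then the linear extension Γ′(Σᵢ aᵢ ρ_{θᵢ}) := Σᵢ aᵢ Γ(ρ_{θᵢ}) is positive on span{ρ_{θᵢ}}: Γ′(ρ) ≥ 0 whenever ρ = Σᵢ aᵢ ρ_{θᵢ} ≥ 0. -/

import Mathlib

open Matrix Complex ComplexOrder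

lemma psd_trace_nonneg {n : ℕ} {A : Matrix (Fin n) (Fin n) ℂ} (hA : A.PosSemidef) :
    0 ≤ A.trace := by
  rw [Matrix.trace]
  refine Finset.sum_nonneg fun i _ => ?_
  have := hA.dotProduct_mulVec_nonneg (Pi.single i 1)
  simpa [dotProduct, Matrix.mulVec, Pi.single_apply, Finset.sum_ite_eq] using this

open scoped MatrixOrder in
lemma psd_trace_mul_nonneg {n : ℕ} {A B : Matrix (Fin n) (Fin n) ℂ}
    (hA : A.PosSemidef) (hB : B.PosSemidef) : 0 ≤ (A * B).trace := by
  have hA0 : 0 ≤ A := nonneg_iff_posSemidef.mpr hA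
  have hs := (CFC.sqrt_nonneg A).posSemidef
  have h1 : (A * B).trace = (CFC.sqrt A * B * CFC.sqrt A).trace := by
    conv_lhs => rw [← CFC.sqrt_mul_sqrt_self A hA0]
    rw [mul_assoc, Matrix.trace_mul_comm]
  rw [h1]
  have h2 : (CFC.sqrt A * B * CFC.sqrt A).PosSemidef := by
    have := hB.mul_mul_conjTranspose_same (CFC.sqrt A)
    rwa [hs.1.eq] at this
  exact psd_trace_nonneg h2

lemma trace_mul_vecMulVec {n : ℕ} (A : Matrix (Fin n) (Fin n) ℂ) (x : Fin n → ℂ) :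
    (A * Matrix.vecMulVec x (star x)).trace = dotProduct (star x) (A *ᵥ x) := by
  simp only [Matrix.trace, Matrix.diag, Matrix.mul_apply, Matrix.vecMulVec_apply,
    dotProduct, Matrix.mulVec, Pi.star_apply, Finset.mul_sum]
  exact Finset.sum_congr rfl fun i _ => Finset.sum_congr rfl fun j _ => by ring

lemma cs_dotProduct {n : ℕ} (x z : Fin n → ℂ) :
    Complex.normSq (dotProduct (star x) z)
      ≤ (∑ i, Complex.normSq (x i)) * (∑ i, Complex.normSq (z i)) := by
  set X : EuclideanSpace ℂ (Fin n) := (WithLp.equiv 2 _).symm x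
  set Z : EuclideanSpace ℂ (Fin n) := (WithLp.equiv 2 _).symm z
  have hin : (inner ℂ X Z : ℂ) = dotProduct (star x) z :=
    by rw [dotProduct_comm]; rfl
  have hx : ‖X‖ ^ 2 = ∑ i, Complex.normSq (x i) := by
    rw [EuclideanSpace.norm_eq, Real.sq_sqrt (by positivity)]
    refine Finset.sum_congr rfl fun i _ => ?_
    rw [show X i = x i from rfl]
    simp [Complex.normSq_eq_norm_sq]
  have hz : ‖Z‖ ^ 2 = ∑ i, Complex.normSq (z i) := by
    rw [EuclideanSpace.norm_eq, Real.sq_sqrt (by positivity)]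
    refine Finset.sum_congr rfl fun i _ => ?_
    rw [show Z i = z i from rfl]
    simp [Complex.normSq_eq_norm_sq]
  have h := norm_inner_le_norm (𝕜 := ℂ) X Z
  have h2 : ‖(inner ℂ X Z : ℂ)‖ ^ 2 ≤ (‖X‖ * ‖Z‖) ^ 2 :=
    pow_le_pow_left₀ (norm_nonneg _) h 2
  calc Complex.normSq (dotProduct (star x) z)
      = ‖(inner ℂ X Z : ℂ)‖ ^ 2 := by rw [hin, Complex.normSq_eq_norm_sq]
    _ ≤ (‖X‖ * ‖Z‖) ^ 2 := h2
    _ = (∑ i, Complex.normSq (x i)) * (∑ i, Complex.normSq (z i)) := by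
        rw [mul_pow, hx, hz]

/-- A finite-outcome POVM: positive operators summing to the identity. -/
def IsPOVM {n k : ℕ} (M : Fin k → Matrix (Fin n) (Fin n) ℂ) : Prop :=
  (∀ t, (M t).PosSemidef) ∧ ∑ t, M t = 1

/-- If `ρ_{θ₁},…,ρ_{θ_m}` are linearly independent density matrices and `Γ` is a
statistical morphism on them, then the linear extension
`Γ′(Σ aᵢ ρ_{θᵢ}) = Σ aᵢ Γ(ρ_{θᵢ})` is positive on their span. -/
theorem statistical_morphism_positive {n n' m : ℕ}
    (ρ : Fin m → Matrix (Fin n) (Fin n) ℂ)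
    (hρ : ∀ i, (ρ i).PosSemidef ∧ (ρ i).trace = 1)
    (hli : LinearIndependent ℝ ρ)
    (Γ : Fin m → Matrix (Fin n') (Fin n') ℂ)
    (hΓ : ∀ i, (Γ i).PosSemidef ∧ (Γ i).trace = 1)
    (hmor : ∀ ε > (0 : ℝ), ∀ k : ℕ, ∀ M : Fin k → Matrix (Fin n') (Fin n') ℂ,
      IsPOVM M → ∃ M' : Fin k → Matrix (Fin n) (Fin n) ℂ, IsPOVM M' ∧
        ∀ i, ∑ t, ‖(Γ i * M t).trace - (ρ i * M' t).trace‖ < ε) :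
    ∀ a : Fin m → ℝ,
      (∑ i, (a i : ℂ) • ρ i).PosSemidef → (∑ i, (a i : ℂ) • Γ i).PosSemidef := by
  intro a hpos
  set σ : Matrix (Fin n') (Fin n') ℂ := ∑ i, (a i : ℂ) • Γ i with hσdef
  have hherm : σ.IsHermitian := by
    show σᴴ = σ
    rw [hσdef, Matrix.conjTranspose_sum]
    refine Finset.sum_congr rfl fun i _ => ?_
    rw [Matrix.conjTranspose_smul, (hΓ i).1.1.eq, Complex.star_def, Complex.conj_ofReal]
  refine Matrix.PosSemidef.of_dotProduct_mulVec_nonneg hherm fun y => ?_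
  by_cases hy : y = 0
  · simp [hy]
  set q : ℂ := dotProduct (star y) (σ *ᵥ y) with hqdef
  rw [Complex.nonneg_iff]
  have him : q.im = 0 := by
    have hst : star q = dotProduct (star y) (σᴴ *ᵥ y) := by
      simp only [hqdef, dotProduct, Matrix.mulVec, Matrix.conjTranspose_apply,
        star_sum, star_mul', star_star, Finset.mul_sum, Pi.star_apply]
      rw [Finset.sum_comm]
      exact Finset.sum_congr rfl fun i _ => Finset.sum_congr rfl fun j _ => by ring
    rw [hherm.eq] at hst
    exact Complex.conj_eq_iff_im.mp hst
  refine ⟨?_, him.symm⟩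
  -- setup of the POVM
  set c : ℝ := ∑ i, Complex.normSq (y i) with hc
  have hc0 : 0 < c := by
    obtain ⟨i, hi⟩ : ∃ i, y i ≠ 0 := by
      by_contra h; push_neg at h; exact hy (funext h)
    exact Finset.sum_pos' (fun j _ => Complex.normSq_nonneg _)
      ⟨i, Finset.mem_univ i, Complex.normSq_pos.mpr hi⟩
  set X : Matrix (Fin n') (Fin n') ℂ := Matrix.vecMulVec y (star y) with hXdef
  set P : Matrix (Fin n') (Fin n') ℂ := ((c : ℂ))⁻¹ • X with hPdef
  have hXq : ∀ z : Fin n' → ℂ, dotProduct (star z) (X *ᵥ z)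
      = (Complex.normSq (dotProduct (star y) z) : ℂ) := by
    intro z
    have h1 : X *ᵥ z = fun i => y i * dotProduct (star y) z := by
      funext i
      simp [hXdef, Matrix.mulVec, dotProduct, Matrix.vecMulVec_apply,
        Finset.mul_sum, mul_assoc]
    rw [h1]
    have h2 : dotProduct (star z) (fun i => y i * dotProduct (star y) z)
        = dotProduct (star z) y * dotProduct (star y) z := by
      simp [dotProduct, Finset.sum_mul, mul_assoc]
    rw [h2]
    have h3 : dotProduct (star z) y
        = starRingEnd ℂ (dotProduct (star y) z) := by
      rw [dotProduct, dotProduct, map_sum]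
      exact Finset.sum_congr rfl fun i _ => by
        simp [mul_comm]
    rw [h3, mul_comm, Complex.mul_conj]
  have hXherm : X.IsHermitian := by
    show Xᴴ = X
    ext i j
    simp [hXdef, Matrix.conjTranspose_apply, Matrix.vecMulVec_apply, mul_comm]
  have hPpsd : P.PosSemidef := by
    refine Matrix.PosSemidef.of_dotProduct_mulVec_nonneg ?_ ?_
    · show Pᴴ = P
      rw [hPdef, Matrix.conjTranspose_smul, hXherm.eq, Complex.star_def, map_inv₀,
        Complex.conj_ofReal]
    · intro z
      have : dotProduct (star z) (P *ᵥ z)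
          = ((c⁻¹ * Complex.normSq (dotProduct (star y) z) : ℝ) : ℂ) := by
        rw [hPdef, Matrix.smul_mulVec, dotProduct_smul, hXq z, smul_eq_mul]
        push_cast
        ring
      rw [this, Complex.zero_le_real]
      exact mul_nonneg (inv_nonneg.mpr hc0.le) (Complex.normSq_nonneg _)
  have h1Ppsd : (1 - P).PosSemidef := by
    refine Matrix.PosSemidef.of_dotProduct_mulVec_nonneg ?_ ?_
    · show (1 - P)ᴴ = 1 - P
      rw [Matrix.conjTranspose_sub, Matrix.conjTranspose_one, hPpsd.1.eq]
    · intro z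
      have hzz : dotProduct (star z) ((1 : Matrix (Fin n') (Fin n') ℂ) *ᵥ z)
          = ((∑ i, Complex.normSq (z i) : ℝ) : ℂ) := by
        rw [Matrix.one_mulVec]
        push_cast
        simp only [dotProduct, Pi.star_apply]
        exact Finset.sum_congr rfl fun i _ => by
          rw [mul_comm, Complex.star_def, Complex.mul_conj]
      have : dotProduct (star z) ((1 - P) *ᵥ z)
          = (((∑ i, Complex.normSq (z i))
              - c⁻¹ * Complex.normSq (dotProduct (star y) z) : ℝ) : ℂ) := by
        rw [Matrix.sub_mulVec, dotProduct_sub, hzz, hPdef,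
          Matrix.smul_mulVec, dotProduct_smul, hXq z, smul_eq_mul]
        push_cast
        ring
      rw [this, Complex.zero_le_real, sub_nonneg, inv_mul_le_iff₀ hc0]
      exact cs_dotProduct y z
  set M : Fin 2 → Matrix (Fin n') (Fin n') ℂ := ![P, 1 - P] with hMdef
  have hPOVM : IsPOVM M := by
    constructor
    · intro t
      fin_cases t
      · exact hPpsd
      · exact h1Ppsd
    · rw [Fin.sum_univ_two]
      show P + (1 - P) = 1
      abel
  -- q as a trace
  have hqtr : q = (c : ℂ) * (σ * M 0).trace := by
    have hM0 : M 0 = P := rfl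
    have : σ * X = (c : ℂ) • (σ * M 0) := by
      rw [hM0, hPdef, Matrix.mul_smul, smul_smul, mul_inv_cancel₀ (by exact_mod_cast hc0.ne'),
        one_smul]
    have h4 : (σ * X).trace = (c : ℂ) * (σ * M 0).trace := by
      rw [this, Matrix.trace_smul, smul_eq_mul]
    rw [hqdef, ← trace_mul_vecMulVec σ y, ← hXdef, h4]
  -- the trace as a linear combination
  have hT : (σ * M 0).trace = ∑ i, (a i : ℂ) * (Γ i * M 0).trace := by
    rw [hσdef, Finset.sum_mul, Matrix.trace_sum]
    exact Finset.sum_congr rfl fun i _ => by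
      rw [Matrix.smul_mul, Matrix.trace_smul, smul_eq_mul]
  set K : ℝ := ∑ i, |a i| with hK
  have hK0 : 0 ≤ K := Finset.sum_nonneg fun i _ => abs_nonneg _
  have key : 0 ≤ ((σ * M 0).trace).re := by
    have main : ∀ ε : ℝ, 0 < ε → -ε ≤ ((σ * M 0).trace).re := by
      intro ε hε
      have hε' : 0 < ε / (K + 1) := by positivity
      obtain ⟨M', hM', hclose⟩ := hmor (ε / (K + 1)) hε' 2 M hPOVM
      set S : ℂ := ∑ i, (a i : ℂ) * (ρ i * M' 0).trace with hS
      have hS0 : 0 ≤ S := by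
        have : S = ((∑ i, (a i : ℂ) • ρ i) * M' 0).trace := by
          rw [Finset.sum_mul, Matrix.trace_sum]
          exact Finset.sum_congr rfl fun i _ => by
            rw [Matrix.smul_mul, Matrix.trace_smul, smul_eq_mul]
        rw [this]
        exact psd_trace_mul_nonneg hpos (hM'.1 0)
      have hdiff : ‖(σ * M 0).trace - S‖ ≤ ε := by
        rw [hT, hS, ← Finset.sum_sub_distrib]
        calc ‖∑ i, ((a i : ℂ) * (Γ i * M 0).trace - (a i : ℂ) * (ρ i * M' 0).trace)‖
            ≤ ∑ i, ‖(a i : ℂ) * (Γ i * M 0).trace - (a i : ℂ) * (ρ i * M' 0).trace‖ :=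
              norm_sum_le _ _
          _ = ∑ i, |a i| * ‖(Γ i * M 0).trace - (ρ i * M' 0).trace‖ := by
              refine Finset.sum_congr rfl fun i _ => ?_
              rw [← mul_sub, norm_mul, Complex.norm_real, Real.norm_eq_abs]
          _ ≤ ∑ i, |a i| * (ε / (K + 1)) := by
              refine Finset.sum_le_sum fun i _ => ?_
              refine mul_le_mul_of_nonneg_left ?_ (abs_nonneg _)
              have h5 : ‖(Γ i * M 0).trace - (ρ i * M' 0).trace‖
                  ≤ ∑ t, ‖(Γ i * M t).trace - (ρ i * M' t).trace‖ :=
                Finset.single_le_sum (f := fun t => ‖(Γ i * M t).trace - (ρ i * M' t).trace‖)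
                  (fun t _ => norm_nonneg _) (Finset.mem_univ 0)
              exact h5.trans (hclose i).le
          _ = K * (ε / (K + 1)) := by rw [← Finset.sum_mul]
          _ ≤ ε := by
              rw [div_eq_inv_mul, ← mul_assoc]
              have : K * (K + 1)⁻¹ ≤ 1 := by
                rw [mul_inv_le_iff₀ (by linarith), one_mul]; linarith
              nlinarith
      have hre : |((σ * M 0).trace).re - S.re| ≤ ε := by
        have := Complex.abs_re_le_norm ((σ * M 0).trace - S)
        simp only [Complex.sub_re] at this
        linarith
      have hSre : 0 ≤ S.re := (Complex.nonneg_iff.mp hS0).1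
      have := abs_le.mp hre
      linarith [this.1]
    by_contra h
    push_neg at h
    have := main (-(((σ * M 0).trace).re) / 2) (by linarith)
    linarith
  have hqre : q.re = c * ((σ * M 0).trace).re := by
    rw [hqtr]
    simp [Complex.mul_re]
  rw [hqre]
  exact mul_nonneg hc0.le key
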